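/- Let (X,d) be a compact metric space and ε > 0. Then widim_ε(X,d) equals the minimum n ≥ 0 such that there exists a finite open cover {U_1,…,U_N} of X with diam(U_i) < ε for all i and such that any n+2 distinct members of the cover have empty intersection. -/

import Mathlib

open scoped ENNReal NNReal
open Set Function Filter Topology

/-- The `n`-th iterate (`n ∈ ℤ`) of a homeomorphism. -/
noncomputable def hIter {X : Type*} [TopologicalSpace X] (T : X ≃ₜ X) (n : ℤ) (x : X) : X :=
  if 0 ≤ n then (⇑T)^[n.toNat] x else (⇑T.symm)^[(-n).toNat] x

/-- `WidimLE d ε n`: there is a finite open cover of mesh `< ε` (w.r.t. the distance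
function `d`) and of order `≤ n`, i.e. every point lies in at most `n+1` members
(equivalently any `n+2` distinct members have empty intersection). -/
def WidimLE {X : Type*} [TopologicalSpace X] (d : X → X → ℝ) (ε : ℝ) (n : ℕ) : Prop :=
  ∃ (N : ℕ) (U : Fin N → Set X),
    (∀ i, IsOpen (U i)) ∧ (⋃ i, U i) = Set.univ ∧
    (∀ i, ∀ x ∈ U i, ∀ y ∈ U i, d x y < ε) ∧
    (∀ x : X, ({i | x ∈ U i} : Set (Fin N)).ncard ≤ n + 1)

/-- `widim d ε` : the ε-width dimension with respect to the distance function `d`. -/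
noncomputable def widim {X : Type*} [TopologicalSpace X] (d : X → X → ℝ) (ε : ℝ) : ℝ≥0∞ :=
  sInf {c : ℝ≥0∞ | ∃ n : ℕ, c = n ∧ WidimLE d ε n}

/-- `dynDist T n` is the dynamical distance `d_0^{n-1}(x,y) = max_{0 ≤ i < n} d(T^i x, T^i y)`. -/
noncomputable def dynDist {X : Type*} [PseudoMetricSpace X] (T : X → X) (n : ℕ) (x y : X) : ℝ :=
  (((Finset.range n).sup fun i => nndist (T^[i] x) (T^[i] y)) : ℝ≥0)

/-- Mean dimension `mdim(X,T) = sup_{ε>0} lim_n widim_ε(X, d_0^{n-1})/n`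
(the limit exists, so it coincides with the limsup used here). -/
noncomputable def mdim {X : Type*} [MetricSpace X] (T : X → X) : ℝ≥0∞ :=
  ⨆ (ε : ℝ) (_ : 0 < ε), Filter.atTop.limsup fun n : ℕ => widim (dynDist T n) ε / (n : ℝ≥0∞)

/-- The left shift on `ℤ`-indexed sequences. -/
def shift {A : Type*} (x : ℤ → A) : ℤ → A := fun n => x (n + 1)

/-- `PolyWidimLE d ε n`: there is a finite simplicial complex (polyhedron) of dimension
`≤ n` (all faces have at most `n+1` vertices) inside some `ℝ^m` and a continuous
`ε`-embedding of `X` into its underlying space. -/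
def PolyWidimLE {X : Type*} [TopologicalSpace X] (d : X → X → ℝ) (ε : ℝ) (n : ℕ) : Prop :=
  ∃ (m : ℕ) (P : Geometry.SimplicialComplex ℝ (Fin m → ℝ)) (f : X → Fin m → ℝ),
    P.faces.Finite ∧ (∀ s ∈ P.faces, s.card ≤ n + 1) ∧
    Continuous f ∧ (∀ x, f x ∈ P.space) ∧
    (∀ x y : X, f x = f y → d x y < ε)

namespace Aux

noncomputable def e (N : ℕ) (i : Fin N) : Fin N → ℝ := Pi.single i 1

lemma e_inj (N : ℕ) : Function.Injective (e N) := by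
  intro i j h
  by_contra hne
  have := congrFun h i
  simp [e, Pi.single_apply, hne] at this

lemma sum_single_eval {N : ℕ} (S : Finset (Fin N)) (p : Fin N → ℝ) (j : Fin N) :
    (∑ i ∈ S, p i • e N i) j = if j ∈ S then p j else 0 := by
  classical
  rw [Finset.sum_apply]
  have : ∀ i ∈ S, (p i • e N i) j = if i = j then p i else 0 := by
    intro i _
    simp [e, Pi.single_apply, eq_comm]
  rw [Finset.sum_congr rfl this, Finset.sum_ite_eq' S j p]

lemma mem_hull_iff {N : ℕ} (S : Finset (Fin N)) (p : Fin N → ℝ) :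
    p ∈ convexHull ℝ (↑(S.image (e N)) : Set (Fin N → ℝ)) ↔
      (∀ j, 0 ≤ p j) ∧ (∀ j ∉ S, p j = 0) ∧ ∑ j ∈ S, p j = 1 := by
  classical
  rw [Finset.mem_convexHull']
  constructor
  · rintro ⟨w, hw0, hw1, hwp⟩
    rw [Finset.sum_image (fun a _ b _ h => e_inj N h)] at hw1 hwp
    have hp : ∀ j, p j = if j ∈ S then w (e N j) else 0 := by
      intro j
      rw [← hwp, sum_single_eval]
    refine ⟨fun j => ?_, fun j hj => ?_, ?_⟩
    · rw [hp j]
      split_ifs with h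
      · exact hw0 _ (Finset.mem_image_of_mem _ h)
      · exact le_refl 0
    · rw [hp j, if_neg hj]
    · rw [← hw1]
      refine Finset.sum_congr rfl fun j hj => ?_
      rw [hp j, if_pos hj]
  · rintro ⟨h0, hz, h1⟩
    refine ⟨fun y => ∑ j, y j * p j, ?_, ?_, ?_⟩
    · rintro y hy
      obtain ⟨i, _, rfl⟩ := Finset.mem_image.1 hy
      have : ∑ j, (e N i) j * p j = p i := by
        simp [e, Pi.single_apply, ite_mul]
      show 0 ≤ ∑ j, (e N i) j * p j
      rw [this]; exact h0 i
    · rw [Finset.sum_image (fun a _ b _ h => e_inj N h)]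
      rw [← h1]
      refine Finset.sum_congr rfl fun i _ => ?_
      simp [e, Pi.single_apply, ite_mul]
    · rw [Finset.sum_image (fun a _ b _ h => e_inj N h)]
      have : ∀ i ∈ S, (∑ j, (e N i) j * p j) • e N i = p i • e N i := by
        intro i _
        congr 1
        simp [e, Pi.single_apply, ite_mul]
      rw [Finset.sum_congr rfl this]
      funext j
      rw [sum_single_eval]
      split_ifs with h
      · rfl
      · exact (hz j h).symm

lemma aff_ind (N : ℕ) : AffineIndependent ℝ (e N) := by
  classical
  rw [affineIndependent_iff]
  intro s w _ hsum j hj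
  have := congrFun hsum j
  rw [sum_single_eval, if_pos hj] at this
  simpa using this

theorem poly_of_widimLE {X : Type*} [MetricSpace X] {d : X → X → ℝ} {ε : ℝ} {n : ℕ}
    (h : WidimLE d ε n) : PolyWidimLE d ε n := by
  classical
  obtain ⟨N, U, hUopen, hUcover, hUdiam, hUord⟩ := h
  set ψ : Fin N → X → ℝ := fun i x => if (U i)ᶜ = ∅ then 1 else Metric.infDist x (U i)ᶜ with hψ
  have hψcont : ∀ i, Continuous (ψ i) := by
    intro i
    simp only [hψ]
    split_ifs
    · exact continuous_const
    · exact Metric.continuous_infDist_pt _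
  have hψnonneg : ∀ i x, 0 ≤ ψ i x := by
    intro i x
    simp only [hψ]
    split_ifs
    · exact zero_le_one
    · exact Metric.infDist_nonneg
  have hψpos : ∀ i x, x ∈ U i ↔ 0 < ψ i x := by
    intro i x
    simp only [hψ]
    split_ifs with hc
    · simp only [iff_true, zero_lt_one]
      have : U i = Set.univ := by
        rw [← compl_compl (U i), hc, Set.compl_empty]
      rw [this]; trivial
    · have hcl : IsClosed (U i)ᶜ := (hUopen i).isClosed_compl
      have hne : ((U i)ᶜ).Nonempty := Set.nonempty_iff_ne_empty.2 hc
      rw [← hcl.notMem_iff_infDist_pos hne, Set.notMem_compl_iff]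
  have hmemx : ∀ x : X, ∃ i, x ∈ U i := by
    intro x
    have : x ∈ ⋃ i, U i := hUcover ▸ Set.mem_univ x
    exact Set.mem_iUnion.1 this
  set σ : X → ℝ := fun x => ∑ i, ψ i x with hσ
  have hσpos : ∀ x, 0 < σ x := by
    intro x
    obtain ⟨i, hi⟩ := hmemx x
    exact Finset.sum_pos' (fun j _ => hψnonneg j x) ⟨i, Finset.mem_univ i, (hψpos i x).1 hi⟩
  set f : X → Fin N → ℝ := fun x i => ψ i x / σ x with hf
  have hfcont : Continuous f := by
    refine continuous_pi fun i => (hψcont i).div ?_ fun x => (hσpos x).ne'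
    exact continuous_finset_sum _ fun j _ => hψcont j
  have hfnonneg : ∀ x i, 0 ≤ f x i := fun x i => div_nonneg (hψnonneg i x) (hσpos x).le
  have hfzero : ∀ x i, x ∉ U i → f x i = 0 := by
    intro x i hx
    have : ψ i x = 0 := le_antisymm (by simpa [hψpos i x] using hx) (hψnonneg i x)
    simp [hf, this]
  have hfpos : ∀ x i, x ∈ U i → 0 < f x i := fun x i hx =>
    div_pos ((hψpos i x).1 hx) (hσpos x)
  have hfsum : ∀ x, ∑ i, f x i = 1 := by
    intro x
    simp only [hf]
    rw [← Finset.sum_div, div_self (hσpos x).ne']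
  -- the nerve
  set A : Set (Finset (Fin N)) := {S | S.Nonempty ∧ ∃ x, ∀ i ∈ S, x ∈ U i} with hA
  set faces : Set (Finset (Fin N → ℝ)) := (fun S : Finset (Fin N) => S.image (e N)) '' A
    with hfaces
  have hfull : ∀ F ∈ faces, ∃ S ∈ A, F = S.image (e N) := by
    rintro F ⟨S, hS, rfl⟩; exact ⟨S, hS, rfl⟩
  have hEq : ∀ S : Finset (Fin N), ((Finset.image (e N) S : Finset (Fin N → ℝ)) : Set (Fin N → ℝ)) ⊆ Set.range (e N) := by
    intro S y hy
    rw [Finset.mem_coe, Finset.mem_image] at hy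
    obtain ⟨i, -, rfl⟩ := hy
    exact Set.mem_range_self i
  have hcard : ∀ S ∈ A, (Finset.image (e N) S).card ≤ n + 1 := by
    rintro S ⟨-, x, hx⟩
    rw [Finset.card_image_of_injective _ (e_inj N)]
    calc S.card = (↑S : Set (Fin N)).ncard := (Set.ncard_coe_finset S).symm
      _ ≤ ({i | x ∈ U i} : Set (Fin N)).ncard :=
          Set.ncard_le_ncard (fun i hi => hx i hi) (Set.toFinite _)
      _ ≤ n + 1 := hUord x
  refine ⟨N, ⟨⟨faces, ?_⟩, ?_, ?_⟩, f, ?_, ?_, hfcont, ?_, ?_⟩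
  · rintro F ⟨S, ⟨hSne, x, hx⟩, rfl⟩
    refine ⟨hSne.image (e N), fun G hGF hGne => ?_⟩
    refine ⟨S.filter (fun i => e N i ∈ G), ⟨?_, x, fun i hi => hx i (Finset.mem_filter.1 hi).1⟩, ?_⟩
    · by_contra hemp
      rw [Finset.not_nonempty_iff_eq_empty] at hemp
      apply hGne.ne_empty
      have : G ⊆ (S.filter (fun i => e N i ∈ G)).image (e N) := by
        intro y hy
        obtain ⟨i, hiS, rfl⟩ := Finset.mem_image.1 (hGF hy)
        exact Finset.mem_image_of_mem _ (Finset.mem_filter.2 ⟨hiS, hy⟩)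
      rw [hemp] at this
      exact Finset.subset_empty.1 (by simpa using this)
    · apply Finset.Subset.antisymm
      · intro y hy
        obtain ⟨i, hi, rfl⟩ := Finset.mem_image.1 hy
        exact (Finset.mem_filter.1 hi).2
      · intro y hy
        obtain ⟨i, hiS, rfl⟩ := Finset.mem_image.1 (hGF hy)
        exact Finset.mem_image_of_mem _ (Finset.mem_filter.2 ⟨hiS, hy⟩)
  · rintro F ⟨S, -, rfl⟩
    exact (aff_ind N).range.mono (hEq S)
  · rintro F G ⟨S, -, rfl⟩ ⟨T, -, rfl⟩ p ⟨hpS, hpT⟩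
    rw [mem_hull_iff] at hpS hpT
    have hint : ((Finset.image (e N) S : Finset (Fin N → ℝ)) : Set (Fin N → ℝ)) ∩
        ((Finset.image (e N) T : Finset (Fin N → ℝ)) : Set (Fin N → ℝ)) =
        ((Finset.image (e N) (S ∩ T) : Finset (Fin N → ℝ)) : Set (Fin N → ℝ)) := by
      rw [← Finset.coe_inter, Finset.image_inter _ _ (e_inj N)]
    rw [hint]
    rw [mem_hull_iff]
    refine ⟨hpS.1, fun j hj => ?_, ?_⟩
    · by_cases hjS : j ∈ S
      · exact hpT.2.1 j (fun hjT => hj (Finset.mem_inter.2 ⟨hjS, hjT⟩))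
      · exact hpS.2.1 j hjS
    · rw [← hpS.2.2]
      apply Finset.sum_subset (Finset.inter_subset_left)
      intro j hjS hjint
      by_cases hjT : j ∈ T
      · exact absurd (Finset.mem_inter.2 ⟨hjS, hjT⟩) hjint
      · exact hpT.2.1 j hjT
  · exact (Set.toFinite A).image _
  · rintro F ⟨S, hS, rfl⟩
    exact hcard S hS
  · intro x
    obtain ⟨i₀, hi₀⟩ := hmemx x
    set Sx : Finset (Fin N) := Finset.univ.filter (fun i => x ∈ U i) with hSx
    have hSxA : Sx ∈ A := ⟨⟨i₀, Finset.mem_filter.2 ⟨Finset.mem_univ _, hi₀⟩⟩,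
      x, fun i hi => (Finset.mem_filter.1 hi).2⟩
    have : f x ∈ convexHull ℝ ((Finset.image (e N) Sx : Finset (Fin N → ℝ)) : Set (Fin N → ℝ)) := by
      rw [mem_hull_iff]
      refine ⟨hfnonneg x, fun j hj => ?_, ?_⟩
      · exact hfzero x j (fun hx => hj (Finset.mem_filter.2 ⟨Finset.mem_univ _, hx⟩))
      · rw [← hfsum x]
        apply Finset.sum_subset (Finset.subset_univ _)
        intro j _ hj
        exact hfzero x j (fun hx => hj (Finset.mem_filter.2 ⟨Finset.mem_univ _, hx⟩))
    exact Set.mem_biUnion ⟨Sx, hSxA, rfl⟩ this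
  · intro x y hxy
    obtain ⟨i, hi⟩ := hmemx x
    have hyi : y ∈ U i := by
      have hpos : 0 < f y i := by
        rw [← hxy]
        exact hfpos x i hi
      by_contra hy
      rw [hfzero y i hy] at hpos
      exact lt_irrefl 0 hpos
    exact hUdiam i x hi y hyi


lemma widimLE_of_fintype_cover {X : Type*} [TopologicalSpace X] {d : X → X → ℝ} {ε : ℝ} {n : ℕ}
    {I : Type*} [Fintype I] (U : I → Set X) (ho : ∀ i, IsOpen (U i)) (hc : (⋃ i, U i) = Set.univ)
    (hd : ∀ i, ∀ x ∈ U i, ∀ y ∈ U i, d x y < ε)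
    (hord : ∀ x, ({i | x ∈ U i} : Set I).ncard ≤ n + 1) : WidimLE d ε n := by
  classical
  obtain ⟨eqv⟩ := Fintype.truncEquivFin I
  refine ⟨Fintype.card I, U ∘ eqv.symm, fun j => ho _, ?_, fun j => hd _, ?_⟩
  · rw [eq_univ_iff_forall]
    intro x
    have : x ∈ ⋃ i, U i := hc ▸ Set.mem_univ x
    obtain ⟨i, hi⟩ := Set.mem_iUnion.1 this
    exact Set.mem_iUnion.2 ⟨eqv i, by simpa using hi⟩
  · intro x
    have : {j | x ∈ (U ∘ eqv.symm) j} = eqv '' {i | x ∈ U i} := by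
      ext j
      simp only [Set.mem_setOf_eq, Set.mem_image, comp_apply]
      constructor
      · intro hj; exact ⟨eqv.symm j, hj, by simp⟩
      · rintro ⟨i, hi, rfl⟩; simpa using hi
    rw [this, Set.ncard_image_of_injective _ eqv.injective]
    exact hord x

/-- abs of integer plus half is at least half -/
lemma abs_int_add_half (t : ℤ) : (1:ℝ)/2 ≤ |(t : ℝ) + 1/2| := by
  rcases le_or_gt 0 t with ht | ht
  · rw [abs_of_nonneg (by positivity)]
    have : (0:ℝ) ≤ t := by exact_mod_cast ht
    linarith
  · have ht0 : t + 1 ≤ 0 := by omega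
    have ht' : (t:ℝ) + 1 ≤ 0 := by exact_mod_cast ht0
    rw [abs_of_nonpos (by linarith)]
    linarith

set_option maxHeartbeats 2000000 in
theorem widimLE_of_coords {X : Type*} [TopologicalSpace X] {d : X → X → ℝ} {ε : ℝ} {n : ℕ}
    {V : Type*} [Fintype V] (φ : V → X → ℝ)
    (hcont : ∀ v, Continuous (φ v))
    (hnn : ∀ v x, 0 ≤ φ v x)
    (hsum : ∀ x, ∑ v, φ v x = 1)
    (hsupp : ∀ x, ({v | φ v x ≠ 0} : Set V).ncard ≤ n + 1)
    (hleb : ∃ h₀ > 0, ∀ x y : X, (∀ v, |φ v x - φ v y| ≤ h₀) → d x y < ε) :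
    WidimLE d ε n := by
  classical
  obtain ⟨h₀, hh₀, hleb⟩ := hleb
  -- choose the scale
  obtain ⟨K, hK⟩ := exists_nat_gt (2 / h₀)
  set h : ℝ := 2 / (2 * K + n + 2) with hh
  have hden : (0:ℝ) < 2 * K + n + 2 := by positivity
  have hhpos : 0 < h := by positivity
  have hKh : 2 < (K:ℝ) * h₀ := (div_lt_iff₀ hh₀).1 hK
  have hhle : h ≤ h₀ := by
    rw [hh, div_le_iff₀ hden]
    nlinarith [Nat.cast_nonneg (α := ℝ) K, Nat.cast_nonneg (α := ℝ) n, hh₀.le]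
  have hone : h * (2 * K + n + 2) = 2 := by
    rw [hh]; field_simp
  set m : ℝ := h / (4 * (n + 2)) with hm
  have hmpos : 0 < m := by positivity
  have hmlt : m < h / (n + 2) := by
    rw [hm, div_lt_div_iff₀ (by positivity) (by positivity)]
    nlinarith [Nat.cast_nonneg (α := ℝ) n]
  have h2mlt : 2 * m < h / (n + 2) := by
    rw [hm, mul_div_assoc']
    rw [div_lt_div_iff₀ (by positivity) (by positivity)]
    nlinarith [Nat.cast_nonneg (α := ℝ) n, hhpos]
  set s : Fin (n+1) → ℝ := fun i => ((i:ℕ) + 1) * h / (n + 2) with hs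
  have hslb : ∀ i, h / (n+2) ≤ s i := by
    intro i
    rw [hs]
    apply div_le_div_of_nonneg_right (c := ((n:ℝ)+2)) ?_ (by positivity)
    nlinarith [hhpos.le, Nat.cast_nonneg (α := ℝ) (i:ℕ)]
  have hsup : ∀ i : Fin (n+1), s i ≤ h := by
    intro i
    rw [hs]
    rw [div_le_iff₀ (by positivity)]
    have : ((i:ℕ):ℝ) + 1 ≤ (n:ℝ) + 1 := by
      have := Nat.lt_succ_iff.1 i.isLt
      exact_mod_cast by exact_mod_cast Nat.succ_le_succ this
    nlinarith [hhpos.le, Nat.cast_nonneg (α := ℝ) n]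
  have hsub : ∀ i : Fin (n+1), s i ≤ h - h/(n+2) := by
    intro i
    rw [hs]
    have hi : ((i:ℕ):ℝ) + 1 ≤ (n:ℝ) + 1 := by
      have := Nat.lt_succ_iff.1 i.isLt
      have : ((i:ℕ):ℝ) ≤ (n:ℝ) := by exact_mod_cast this
      linarith
    rw [div_le_iff₀ (by positivity)]
    have expand : (h - h/(n+2)) * ((n:ℝ)+2) = h * ((n:ℝ)+1) := by field_simp; ring
    rw [expand]
    nlinarith [hhpos.le]
  have hle1 : ∀ v x, φ v x ≤ 1 := by
    intro v x
    rw [← hsum x]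
    exact Finset.single_le_sum (fun u _ => hnn u x) (Finset.mem_univ v)
  -- distance of shifted grid from 0
  have hdivpos : (0:ℝ) < h/((n:ℝ)+2) := div_pos hhpos (by positivity)
  have hgrid0 : ∀ (i : Fin (n+1)) (b : ℤ), m < |(0:ℝ) - (h * b + s i)| := by
    intro i b
    rcases le_or_gt 0 b with hb | hb
    · have hb' : (0:ℝ) ≤ (b:ℝ) := by exact_mod_cast hb
      have hz : h/(n+2) ≤ h * b + s i := by nlinarith [hslb i, hhpos.le, mul_nonneg hhpos.le hb']
      rw [zero_sub, abs_neg, abs_of_nonneg (by linarith)]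
      linarith [hmlt]
    · have hb1 : b ≤ -1 := by omega
      have hb' : (b:ℝ) ≤ -1 := by exact_mod_cast hb1
      have hz : h * b + s i ≤ -(h/(n+2)) := by nlinarith [hsub i, hhpos.le]
      rw [zero_sub, abs_neg, abs_of_nonpos (by linarith)]
      linarith [hmlt]
  -- separation of two different shifted grids
  have hgridsep : ∀ (c : ℤ) (i j : Fin (n+1)), i ≠ j →
      h/(n+2) ≤ |h * c + (s i - s j)| := by
    intro c i j hij
    have hsij : s i - s j = (((i:ℕ):ℝ) - ((j:ℕ):ℝ)) * h / (n+2) := by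
      rw [hs]; ring
    set r : ℤ := ((i:ℕ):ℤ) - ((j:ℕ):ℤ) with hr
    have hrne : r ≠ 0 := by
      simp only [hr, sub_ne_zero]
      exact_mod_cast fun hc => hij (Fin.ext (by exact_mod_cast hc))
    have hint : c * ((n:ℤ)+2) + r ≠ 0 := by
      intro hzero
      have h1 : r = -(c * ((n:ℤ)+2)) := by linear_combination hzero
      have hrle : |r| ≤ (n:ℤ) := by
        rw [hr, abs_le]
        have hi1 := i.isLt
        have hj1 := j.isLt
        constructor <;> omega
      rcases eq_or_ne c 0 with hc0 | hc0
      · rw [hc0] at h1; simp at h1; exact hrne h1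
      · have h2 : (1:ℤ) ≤ |c| := Int.one_le_abs hc0
        have h3 : |(n:ℤ)+2| = (n:ℤ)+2 := abs_of_nonneg (by omega)
        have h4 : (n:ℤ) + 2 ≤ |r| := by
          rw [h1, abs_neg, abs_mul, h3]
          nlinarith
        have h5 := le_trans h4 hrle
        omega
    have habs : (1:ℝ) ≤ |(c:ℝ) * ((n:ℝ)+2) + r| := by
      have : (1:ℤ) ≤ |c * ((n:ℤ)+2) + r| := Int.one_le_abs hint
      have hcast : ((c * ((n:ℤ)+2) + r : ℤ):ℝ) = (c:ℝ) * ((n:ℝ)+2) + (r:ℝ) := by push_cast; ring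
      calc (1:ℝ) = ((1:ℤ):ℝ) := by norm_num
        _ ≤ |((c * ((n:ℤ)+2) + r : ℤ):ℝ)| := by rw [← Int.cast_abs]; exact_mod_cast this
        _ = |(c:ℝ) * ((n:ℝ)+2) + r| := by rw [hcast]
    have hform : h * c + (s i - s j) = (h/((n:ℝ)+2)) * ((c:ℝ) * ((n:ℝ)+2) + r) := by
      rw [hsij, hr]
      push_cast
      field_simp
    rw [hform, abs_mul, abs_of_nonneg (by positivity : (0:ℝ) ≤ h/((n:ℝ)+2))]
    calc h/((n:ℝ)+2) = h/((n:ℝ)+2) * 1 := by ring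
      _ ≤ h/((n:ℝ)+2) * |(c:ℝ) * ((n:ℝ)+2) + (r:ℝ)| :=
          mul_le_mul_of_nonneg_left habs (by positivity)
  -- the index type
  set B : Finset ℤ := Finset.Icc (-1) ((K:ℤ) + n + 2) with hB
  set C : (Fin (n+1) × (V → B)) → Set X := fun p =>
    ⋂ v, (φ v) ⁻¹' (Set.Ioo (h * ((p.2 v : ℤ) : ℝ) + s p.1 + m)
      (h * ((p.2 v : ℤ) : ℝ) + h + s p.1 - m)) with hC
  have hmemC : ∀ p x, x ∈ C p ↔ ∀ v,
      h * ((p.2 v : ℤ) : ℝ) + s p.1 + m < φ v x ∧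
      φ v x < h * ((p.2 v : ℤ) : ℝ) + h + s p.1 - m := by
    intro p x
    rw [hC]
    simp only [Set.mem_iInter, Set.mem_preimage, Set.mem_Ioo]
  apply widimLE_of_fintype_cover C
  · intro p
    exact isOpen_iInter_of_finite fun v => (hcont v).isOpen_preimage _ isOpen_Ioo
  · -- covering
    rw [eq_univ_iff_forall]
    intro x
    rw [Set.mem_iUnion]
    have hgood : ∃ i : Fin (n+1), ∀ v, ∀ b : ℤ, m < |φ v x - (h * b + s i)| := by
      by_contra hbad
      push_neg at hbad
      choose v b hvb using hbad
      -- bad witnesses have nonzero coordinate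
      have hvnz : ∀ i, φ (v i) x ≠ 0 := by
        intro i h0
        have := hvb i
        rw [h0] at this
        exact absurd this (not_le.2 (hgrid0 i (b i)))
      -- injectivity of bad witnesses
      have hvinj : Function.Injective v := by
        intro i j hij
        by_contra hne
        have h1 := hvb i
        have h2 := hvb j
        rw [hij] at h1
        have hdist : |h * ((b i : ℝ) - (b j : ℝ)) + (s i - s j)| ≤ 2 * m := by
          have : h * ((b i : ℝ) - (b j : ℝ)) + (s i - s j) =
              (φ (v j) x - (h * (b j) + s j)) - (φ (v j) x - (h * (b i) + s i)) := by ring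
          rw [this]
          calc |_ - _| ≤ |φ (v j) x - (h * (b j) + s j)| + |φ (v j) x - (h * (b i) + s i)| :=
                abs_sub _ _
            _ ≤ 2 * m := by linarith
        have hcast : h * ((b i : ℝ) - (b j : ℝ)) = h * ((b i - b j : ℤ) : ℝ) := by push_cast; ring
        rw [hcast] at hdist
        have := hgridsep (b i - b j) i j hne
        linarith [hmlt, h2mlt]
      -- the support is exactly the range of v
      have hrange : Set.range v = {u | φ u x ≠ 0} := by
        apply Set.eq_of_subset_of_ncard_le
        · rintro u ⟨i, rfl⟩; exact hvnz i
        · have : (Set.range v).ncard = n + 1 := by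
            rw [← Set.image_univ, Set.ncard_image_of_injective _ hvinj, Set.ncard_univ,
              Nat.card_eq_fintype_card, Fintype.card_fin]
          rw [this]
          exact hsupp x
        · exact Set.toFinite _
      -- sum of coordinates over the range
      have hsum1 : ∑ i : Fin (n+1), φ (v i) x = 1 := by
        have himg : ∑ u ∈ Finset.image v Finset.univ, φ u x = ∑ i : Fin (n+1), φ (v i) x :=
          Finset.sum_image (fun a _ c _ hac => hvinj hac)
        rw [← himg, ← hsum x]
        apply Finset.sum_subset (Finset.subset_univ _)
        intro u _ hu
        by_contra hne
        have hur : u ∈ Set.range v := hrange ▸ (hne : φ u x ≠ 0)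
        obtain ⟨i, rfl⟩ := hur
        exact hu (Finset.mem_image_of_mem v (Finset.mem_univ i))
      -- sum of the shifts
      have hssum : ∑ i : Fin (n+1), s i = h * ((n:ℝ)+1) / 2 := by
        have hnat : (∑ i : Fin (n+1), (((i:ℕ):ℝ) + 1)) = ((n:ℝ)+1) * ((n:ℝ)+2) / 2 := by
          have h2 := Finset.sum_range_id_mul_two (n+1)
          have h3 : (∑ i : Fin (n+1), (((i:ℕ):ℝ) + 1)) =
              ((∑ j ∈ Finset.range (n+1), j : ℕ):ℝ) + ((n:ℝ)+1) := by
            rw [Fin.sum_univ_eq_sum_range (fun j => ((j:ℝ) + 1)) (n+1), Finset.sum_add_distrib,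
              Finset.sum_const, Finset.card_range]
            push_cast
            ring
          have h4 : ((∑ j ∈ Finset.range (n+1), j : ℕ):ℝ) * 2 = ((n:ℝ)+1) * (n:ℝ) := by
            exact_mod_cast congrArg (Nat.cast : ℕ → ℝ) h2
          rw [h3]
          linarith
        rw [hs, ← Finset.sum_div, ← Finset.sum_mul, hnat]
        field_simp
      -- final contradiction
      set E : ℝ := ∑ i : Fin (n+1), (φ (v i) x - (h * (b i) + s i)) with hE
      have hEbound : |E| ≤ ((n:ℝ)+1) * m := by
        rw [hE]
        calc |∑ i : Fin (n+1), (φ (v i) x - (h * (b i) + s i))|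
            ≤ ∑ i : Fin (n+1), |φ (v i) x - (h * (b i) + s i)| := Finset.abs_sum_le_sum_abs _ _
          _ ≤ ∑ _i : Fin (n+1), m := Finset.sum_le_sum (fun i _ => hvb i)
          _ = ((n:ℝ)+1) * m := by
              rw [Finset.sum_const, Finset.card_univ, Fintype.card_fin, nsmul_eq_mul]
              push_cast
              ring
      set Bz : ℤ := ∑ i : Fin (n+1), b i with hBz
      have hEeq : E = h * (((K:ℤ) - Bz : ℤ) + 1/2 : ℝ) := by
        rw [hE, Finset.sum_sub_distrib, hsum1, Finset.sum_add_distrib, ← Finset.mul_sum, hssum]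
        have hBzc : (∑ i : Fin (n+1), ((b i : ℝ))) = ((Bz:ℤ):ℝ) := by
          rw [hBz]; push_cast; ring
        rw [hBzc]
        have h1 : (1:ℝ) = h * K + h * ((n:ℝ)+2)/2 := by linear_combination -hone / 2
        push_cast
        linear_combination h1
      have hlow : h/2 ≤ |E| := by
        rw [hEeq, abs_mul, abs_of_nonneg hhpos.le]
        have := abs_int_add_half ((K:ℤ) - Bz)
        nlinarith [hhpos.le]
      have hup : ((n:ℝ)+1) * m < h/2 := by
        rw [hm]
        rw [show ((n:ℝ)+1) * (h / (4*((n:ℝ)+2))) = ((n:ℝ)+1) * h / (4*((n:ℝ)+2)) by ring]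
        rw [div_lt_div_iff₀ (by positivity) (by positivity)]
        nlinarith [hhpos, Nat.cast_nonneg (α := ℝ) n]
      linarith
    obtain ⟨i, hi⟩ := hgood
    set a : V → ℤ := fun v => ⌊(φ v x - s i)/h⌋ with ha
    have hfl : ∀ v, h * (a v) ≤ φ v x - s i ∧ φ v x - s i < h * (a v) + h := by
      intro v
      constructor
      · calc h * (a v) = (a v) * h := by ring
          _ ≤ ((φ v x - s i)/h) * h := by
            apply mul_le_mul_of_nonneg_right (Int.floor_le _) hhpos.le
          _ = φ v x - s i := by field_simp
      · calc φ v x - s i = ((φ v x - s i)/h) * h := by field_simp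
          _ < ((a v : ℝ) + 1) * h := by
            apply mul_lt_mul_of_pos_right (Int.lt_floor_add_one _) hhpos
          _ = h * (a v) + h := by ring
    have haB : ∀ v, a v ∈ B := by
      intro v
      rw [hB, Finset.mem_Icc]
      constructor
      · rw [ha]
        apply Int.le_floor.2
        have := hnn v x
        have := hsup i
        have : (-1:ℝ) ≤ (φ v x - s i)/h := by
          rw [le_div_iff₀ hhpos]
          nlinarith
        exact_mod_cast this
      · rw [ha]
        have hz : (φ v x - s i)/h ≤ (((K:ℤ) + n + 2 : ℤ):ℝ) := by
          rw [div_le_iff₀ hhpos]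
          have h1 : φ v x - s i ≤ 1 := by
            have := hle1 v x
            have := hslb i
            have := div_pos hhpos (by positivity : (0:ℝ) < (n:ℝ)+2)
            linarith
          have h2 : (1:ℝ) ≤ (((K:ℤ) + n + 2 : ℤ):ℝ) * h := by
            push_cast
            nlinarith [hone, hhpos.le]
          linarith
        calc ⌊(φ v x - s i)/h⌋ ≤ ⌊(((K:ℤ) + n + 2 : ℤ):ℝ)⌋ := Int.floor_le_floor hz
          _ = (K:ℤ) + n + 2 := Int.floor_intCast _
    refine ⟨⟨i, fun v => ⟨a v, haB v⟩⟩, ?_⟩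
    rw [hmemC]
    intro v
    simp only
    obtain ⟨hfl1, hfl2⟩ := hfl v
    have hlow := hi v (a v)
    have hhigh := hi v (a v + 1)
    constructor
    · have h0 : 0 ≤ φ v x - (h * (a v) + s i) := by linarith
      have := abs_of_nonneg h0 ▸ hlow
      linarith [this]
    · have h0 : φ v x - (h * ((a v : ℝ) + 1) + s i) < 0 := by linarith
      have habs := hhigh
      have hcast : ((a v + 1 : ℤ):ℝ) = (a v : ℝ) + 1 := by push_cast; ring
      rw [hcast] at habs
      rw [abs_of_nonpos h0.le] at habs
      linarith
  · -- mesh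
    intro p x hx y hy
    apply hleb
    intro v
    rw [hmemC] at hx hy
    obtain ⟨h1, h2⟩ := hx v
    obtain ⟨h3, h4⟩ := hy v
    have hlt : |φ v x - φ v y| < h - 2*m := by
      rw [abs_sub_lt_iff]
      constructor <;> linarith
    nlinarith [hmpos, hhle]
  · -- order
    intro x
    have hinj : Set.InjOn Prod.fst {p : Fin (n+1) × (V → B) | x ∈ C p} := by
      rintro ⟨i, α⟩ hα ⟨j, β⟩ hβ hfst
      simp only at hfst
      subst hfst
      rw [Set.mem_setOf_eq, hmemC] at hα hβ
      congr 1
      funext v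
      obtain ⟨ha1, ha2⟩ := hα v
      obtain ⟨hb1, hb2⟩ := hβ v
      apply Subtype.ext
      rcases lt_trichotomy ((α v : ℤ)) ((β v : ℤ)) with hlt | heq | hgt
      · exfalso
        have hc : ((α v : ℤ):ℝ) + 1 ≤ ((β v : ℤ):ℝ) := by exact_mod_cast hlt
        nlinarith [hmpos, mul_le_mul_of_nonneg_left hc hhpos.le]
      · exact heq
      · exfalso
        have hc : ((β v : ℤ):ℝ) + 1 ≤ ((α v : ℤ):ℝ) := by exact_mod_cast hgt
        nlinarith [hmpos, mul_le_mul_of_nonneg_left hc hhpos.le]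
    calc ({p | x ∈ C p} : Set _).ncard
        = (Prod.fst '' {p | x ∈ C p}).ncard := (Set.ncard_image_of_injOn hinj).symm
      _ ≤ (Set.univ : Set (Fin (n+1))).ncard :=
          Set.ncard_le_ncard (Set.subset_univ _) (Set.toFinite _)
      _ = n + 1 := by rw [Set.ncard_univ, Nat.card_eq_fintype_card, Fintype.card_fin]


set_option maxHeartbeats 1000000 in
theorem widimLE_of_poly {X : Type*} [MetricSpace X] [CompactSpace X] {ε : ℝ} {n : ℕ}
    (hpoly : PolyWidimLE (fun x y : X => dist x y) ε n) :
    WidimLE (fun x y : X => dist x y) ε n := by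
  classical
  obtain ⟨M, P, f, hPfin, hPcard, hfcont, hfspace, hfemb⟩ := hpoly
  -- the (finite) set of all vertices
  set T : Finset (Fin M → ℝ) := hPfin.toFinset.biUnion id with hT
  have hsT : ∀ {u : Finset (Fin M → ℝ)}, u ∈ P.faces → u ⊆ T := by
    intro u hu y hy
    rw [hT, Finset.mem_biUnion]
    exact ⟨u, hPfin.mem_toFinset.2 hu, hy⟩
  -- extend each face to an affine basis
  have hbasis : ∀ u : Finset (Fin M → ℝ), u ∈ P.faces →
      ∃ (tu : Set (Fin M → ℝ)), ↑u ⊆ tu ∧ AffineIndependent ℝ ((↑) : tu → (Fin M → ℝ)) ∧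
        affineSpan ℝ tu = ⊤ := by
    intro u hu
    exact exists_subset_affineIndependent_affineSpan_eq_top (P.indep hu)
  choose t hsub hind htop using hbasis
  set b : ∀ (u : Finset (Fin M → ℝ)) (hu : u ∈ P.faces), AffineBasis (t u hu) ℝ (Fin M → ℝ) :=
    fun u hu => ⟨(↑), hind u hu, by rw [Subtype.range_coe]; exact htop u hu⟩ with hb
  -- the weight functions
  set wt : ∀ (u : Finset (Fin M → ℝ)), u ∈ P.faces → (Fin M → ℝ) → (Fin M → ℝ) → ℝ :=
    fun u hu v p => if hv : v ∈ t u hu then (b u hu).coord ⟨v, hv⟩ p else 0 with hwt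
  have hwt_cont : ∀ u hu v, Continuous (wt u hu v) := by
    intro u hu v
    rw [hwt]
    by_cases hv : v ∈ t u hu
    · simp only [dif_pos hv]
      exact ((b u hu).coord ⟨v, hv⟩).continuous_of_finiteDimensional
    · simp only [dif_neg hv]
      exact continuous_const
  -- the key computation: weights of an affine combination supported on a face
  have hwt_combo : ∀ (u : Finset (Fin M → ℝ)) (hu : u ∈ P.faces) (w : (Fin M → ℝ) → ℝ),
      ∑ y ∈ u, w y = 1 → ∀ v, wt u hu v (∑ y ∈ u, w y • y) = if v ∈ u then w v else 0 := by
    intro u hu w hw v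
    set emb : ↥u ↪ ↥(t u hu) :=
      ⟨fun y => ⟨y.1, hsub u hu y.2⟩, fun a c hac => by
        have hval := congrArg Subtype.val hac
        exact Subtype.ext hval⟩
      with hemb
    set u' : Finset ↥(t u hu) := u.attach.map emb with hu'
    have hmem' : ∀ z : ↥(t u hu), z ∈ u' ↔ (z : Fin M → ℝ) ∈ u := by
      intro z
      rw [hu', Finset.mem_map]
      constructor
      · rintro ⟨y, -, rfl⟩
        exact y.2
      · intro hz
        exact ⟨⟨z.1, hz⟩, Finset.mem_attach _ _, Subtype.ext rfl⟩
    have hsum' : ∑ z ∈ u', w (z : Fin M → ℝ) = 1 := by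
      rw [hu', Finset.sum_map]
      rw [← hw]
      exact Finset.sum_attach u (fun y => w y)
    have hcombo : u'.affineCombination ℝ (⇑(b u hu)) (fun z => w (z : Fin M → ℝ)) =
        ∑ y ∈ u, w y • y := by
      rw [Finset.affineCombination_eq_linear_combination _ _ _ hsum']
      rw [hu', Finset.sum_map]
      have : ∀ y ∈ u.attach, w ((emb y : ↥(t u hu)) : Fin M → ℝ) • ((b u hu) (emb y)) =
          w (y : Fin M → ℝ) • (y : Fin M → ℝ) := by
        intro y _
        rfl
      rw [Finset.sum_congr rfl this]
      exact Finset.sum_attach u (fun y => w y • y)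
    rw [hwt]
    by_cases hv : v ∈ t u hu
    · simp only [dif_pos hv]
      rw [← hcombo]
      by_cases hvu : v ∈ u
      · rw [(b u hu).coord_apply_combination_of_mem ((hmem' ⟨v, hv⟩).2 hvu) hsum']
        rw [if_pos hvu]
      · rw [(b u hu).coord_apply_combination_of_notMem
          (fun hc => hvu ((hmem' ⟨v, hv⟩).1 hc)) hsum']
        rw [if_neg hvu]
    · simp only [dif_neg hv]
      have hvu : v ∉ u := fun hc => hv (hsub u hu hc)
      rw [if_neg hvu]
  -- representation of a point of the hull of a face
  have hrep : ∀ (u : Finset (Fin M → ℝ)), u ∈ P.faces →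
      ∀ p ∈ convexHull ℝ (↑u : Set (Fin M → ℝ)),
      ∃ w : (Fin M → ℝ) → ℝ, (∀ y ∈ u, 0 ≤ w y) ∧ ∑ y ∈ u, w y = 1 ∧
        (∑ y ∈ u, w y • y) = p := by
    intro u _ p hp
    exact Finset.mem_convexHull'.1 hp
  -- well-definedness of the weights
  have hwell : ∀ (u : Finset (Fin M → ℝ)) (hu : u ∈ P.faces)
      (u₂ : Finset (Fin M → ℝ)) (hu₂ : u₂ ∈ P.faces) (p : Fin M → ℝ),
      p ∈ convexHull ℝ (↑u : Set (Fin M → ℝ)) → p ∈ convexHull ℝ (↑u₂ : Set (Fin M → ℝ)) →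
      ∀ v, wt u hu v p = wt u₂ hu₂ v p := by
    intro u hu u₂ hu₂ p hp hp₂ v
    have hpi : p ∈ convexHull ℝ (↑(u ∩ u₂) : Set (Fin M → ℝ)) := by
      rw [Finset.coe_inter]
      exact P.inter_subset_convexHull hu hu₂ ⟨hp, hp₂⟩
    obtain ⟨w, hw0, hw1, hwp⟩ := Finset.mem_convexHull'.1 hpi
    set w' : (Fin M → ℝ) → ℝ := fun y => if y ∈ u ∩ u₂ then w y else 0 with hw'
    have key : ∀ (u₃ : Finset (Fin M → ℝ)) (hu₃ : u₃ ∈ P.faces), u ∩ u₂ ⊆ u₃ →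
        wt u₃ hu₃ v p = if v ∈ u ∩ u₂ then w v else 0 := by
      intro u₃ hu₃ hsub₃
      have hinter : u₃ ∩ (u ∩ u₂) = u ∩ u₂ := Finset.inter_eq_right.2 hsub₃
      have hw1' : ∑ y ∈ u₃, w' y = 1 := by
        simp only [hw']
        rw [Finset.sum_ite_mem, hinter, hw1]
      have hwp' : ∑ y ∈ u₃, w' y • y = p := by
        simp only [hw', ite_smul, zero_smul]
        rw [Finset.sum_ite_mem, hinter, hwp]
      have hkey := hwt_combo u₃ hu₃ w' hw1' v
      rw [hwp'] at hkey
      rw [hkey]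
      by_cases hv3 : v ∈ u₃
      · simp only [if_pos hv3, hw']
      · rw [if_neg hv3, if_neg (fun hc => hv3 (hsub₃ hc))]
    rw [key u hu Finset.inter_subset_left, key u₂ hu₂ Finset.inter_subset_right]
  -- properties of the weights on the hull of a face
  have hwt_props : ∀ (u : Finset (Fin M → ℝ)) (hu : u ∈ P.faces) (p : Fin M → ℝ),
      p ∈ convexHull ℝ (↑u : Set (Fin M → ℝ)) →
      (∀ v, 0 ≤ wt u hu v p) ∧ (∀ v, v ∉ u → wt u hu v p = 0) ∧
      (∑ v ∈ u, wt u hu v p = 1) ∧ (∑ v ∈ u, wt u hu v p • v = p) := by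
    intro u hu p hp
    obtain ⟨w, hw0, hw1, hwp⟩ := Finset.mem_convexHull'.1 hp
    have hc := hwt_combo u hu w hw1
    rw [hwp] at hc
    refine ⟨fun v => ?_, fun v hv => ?_, ?_, ?_⟩
    · rw [hc v]
      split_ifs with hvu
      · exact hw0 v hvu
      · exact le_refl 0
    · rw [hc v, if_neg hv]
    · have heq : ∑ v ∈ u, wt u hu v p = ∑ v ∈ u, w v :=
        Finset.sum_congr rfl (fun v hv => by rw [hc v, if_pos hv])
      rw [heq, hw1]
    · have heq : ∑ v ∈ u, wt u hu v p • v = ∑ v ∈ u, w v • v :=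
        Finset.sum_congr rfl (fun v hv => by rw [hc v, if_pos hv])
      rw [heq, hwp]
  -- carrier face of each point
  have hcar0 : ∀ x : X, ∃ u : Finset (Fin M → ℝ), ∃ _ : u ∈ P.faces,
      f x ∈ convexHull ℝ (↑u : Set (Fin M → ℝ)) := by
    intro x
    have hsp := hfspace x
    rw [Geometry.SimplicialComplex.space] at hsp
    obtain ⟨u, hu, hxu⟩ := Set.mem_iUnion₂.1 hsp
    exact ⟨u, hu, hxu⟩
  choose car hcar hcarmem using hcar0
  -- the coordinate functions
  have hφcont : ∀ v : ↥T, Continuous (fun x => wt (car x) (hcar x) (v : Fin M → ℝ) (f x)) := by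
    intro v
    haveI : Finite ↥P.faces := hPfin.to_subtype
    apply LocallyFinite.continuous
      (f := fun u : ↥P.faces => f ⁻¹' (convexHull ℝ (↑u.1 : Set (Fin M → ℝ))))
    · exact locallyFinite_of_finite _
    · rw [Set.eq_univ_iff_forall]
      intro x
      exact Set.mem_iUnion.2 ⟨⟨car x, hcar x⟩, hcarmem x⟩
    · intro u
      exact IsClosed.preimage hfcont (u.1.finite_toSet.isCompact_convexHull ℝ).isClosed
    · intro u
      apply ContinuousOn.congr ((hwt_cont u.1 u.2 (v : Fin M → ℝ)).comp hfcont).continuousOn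
      intro x hx
      exact hwell (car x) (hcar x) u.1 u.2 (f x) (hcarmem x) hx (v : Fin M → ℝ)
  have hφnn : ∀ (v : ↥T) (x : X), 0 ≤ wt (car x) (hcar x) (v : Fin M → ℝ) (f x) :=
    fun v x => (hwt_props _ _ _ (hcarmem x)).1 _
  have hφsum : ∀ x, ∑ v : ↥T, wt (car x) (hcar x) (v : Fin M → ℝ) (f x) = 1 := by
    intro x
    obtain ⟨-, hzero, hsum1, -⟩ := hwt_props (car x) (hcar x) (f x) (hcarmem x)
    rw [Finset.sum_coe_sort T (fun v => wt (car x) (hcar x) v (f x)), ← hsum1]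
    exact (Finset.sum_subset (hsT (hcar x)) (fun v _ hv => hzero v hv)).symm
  have hφsupp : ∀ x, ({v : ↥T | wt (car x) (hcar x) (v : Fin M → ℝ) (f x) ≠ 0}).ncard ≤ n + 1 := by
    intro x
    obtain ⟨-, hzero, -, -⟩ := hwt_props (car x) (hcar x) (f x) (hcarmem x)
    have hss : (Subtype.val '' {v : ↥T | wt (car x) (hcar x) (v : Fin M → ℝ) (f x) ≠ 0}) ⊆
        (↑(car x) : Set (Fin M → ℝ)) := by
      rintro y ⟨v, hv, rfl⟩
      by_contra hy
      exact hv (hzero _ hy)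
    calc ({v : ↥T | wt (car x) (hcar x) (v : Fin M → ℝ) (f x) ≠ 0}).ncard
        = (Subtype.val '' {v : ↥T | wt (car x) (hcar x) (v : Fin M → ℝ) (f x) ≠ 0}).ncard :=
          (Set.ncard_image_of_injective _ Subtype.val_injective).symm
      _ ≤ (↑(car x) : Set (Fin M → ℝ)).ncard := Set.ncard_le_ncard hss (Set.toFinite _)
      _ = (car x).card := Set.ncard_coe_finset _
      _ ≤ n + 1 := hPcard _ (hcar x)
  have hrecover : ∀ x, ∑ v ∈ T, wt (car x) (hcar x) v (f x) • v = f x := by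
    intro x
    obtain ⟨-, hzero, -, hrec⟩ := hwt_props (car x) (hcar x) (f x) (hcarmem x)
    exact ((Finset.sum_subset (hsT (hcar x))
      (fun v _ hv => by rw [hzero v hv, zero_smul])).symm).trans hrec
  have hinj : ∀ x y : X,
      (∀ v : ↥T, wt (car x) (hcar x) (v : Fin M → ℝ) (f x)
        = wt (car y) (hcar y) (v : Fin M → ℝ) (f y)) → f x = f y := by
    intro x y hvv
    rw [← hrecover x, ← hrecover y]
    exact Finset.sum_congr rfl (fun v hvT => by rw [hvv ⟨v, hvT⟩])
  -- Lebesgue-type uniformity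
  have hΦcont : Continuous (fun x : X => (fun v : ↥T => wt (car x) (hcar x) (v : Fin M → ℝ) (f x))) :=
    continuous_pi hφcont
  set Φ : X → (↥T → ℝ) := fun x v => wt (car x) (hcar x) (v : Fin M → ℝ) (f x) with hΦ
  have hleb : ∃ h₀ > 0, ∀ x y : X, (∀ v : ↥T, |Φ x v - Φ y v| ≤ h₀) → dist x y < ε := by
    set Cset : Set (X × X) := {q | ε ≤ dist q.1 q.2} with hCset
    have hCclosed : IsClosed Cset := isClosed_le continuous_const continuous_dist
    rcases Cset.eq_empty_or_nonempty with hCe | hCne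
    · refine ⟨1, one_pos, fun x y _ => ?_⟩
      by_contra hc
      push_neg at hc
      have : (x, y) ∈ Cset := hc
      rw [hCe] at this
      exact this
    · have hCcomp : IsCompact Cset := hCclosed.isCompact
      have hgc : Continuous (fun q : X × X => dist (Φ q.1) (Φ q.2)) :=
        Continuous.dist (hΦcont.comp continuous_fst) (hΦcont.comp continuous_snd)
      obtain ⟨q0, hq0, hq0min⟩ := hCcomp.exists_isMinOn hCne hgc.continuousOn
      set D : ℝ := dist (Φ q0.1) (Φ q0.2) with hD
      have hDpos : 0 < D := by
        rcases lt_or_eq_of_le (dist_nonneg (x := Φ q0.1) (y := Φ q0.2)) with hlt | heq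
        · exact hlt
        · exfalso
          have hΦeq : Φ q0.1 = Φ q0.2 := dist_eq_zero.1 heq.symm
          have hfe : f q0.1 = f q0.2 := hinj q0.1 q0.2 (fun v => congrFun hΦeq v)
          have := hfemb q0.1 q0.2 hfe
          simp only at this
          exact absurd hq0 (not_le.2 this)
      refine ⟨D/2, by positivity, fun x y hxy => ?_⟩
      by_contra hc
      push_neg at hc
      have hmem : (x, y) ∈ Cset := hc
      have hDle : dist (Φ x) (Φ y) ≤ D/2 := by
        rw [dist_pi_le_iff (by positivity)]
        intro v
        rw [Real.dist_eq]
        exact hxy v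
      have h2 : D ≤ dist (Φ x) (Φ y) := hq0min hmem
      linarith
  obtain ⟨h₀, hh₀, hl⟩ := hleb
  exact widimLE_of_coords (V := ↥T)
    (fun v x => wt (car x) (hcar x) (v : Fin M → ℝ) (f x))
    hφcont hφnn hφsum hφsupp ⟨h₀, hh₀, fun x y hxy => hl x y hxy⟩


end Aux

/-- For a compact metric space `(X,d)` and `ε > 0`, `widim_ε(X,d)` (defined via
ε-embeddings into at most `n`-dimensional polyhedra) coincides with the minimum `n`
admitting a finite open cover of mesh `< ε` and order `≤ n`. -/
theorem stmt1 {X : Type*} [MetricSpace X] [CompactSpace X] {ε : ℝ} (hε : 0 < ε) :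
    sInf {c : ℝ≥0∞ | ∃ n : ℕ, c = n ∧ PolyWidimLE (fun x y : X => dist x y) ε n}
      = widim (fun x y : X => dist x y) ε := by
  unfold widim
  congr 1
  ext c
  simp only [Set.mem_setOf_eq]
  constructor
  · rintro ⟨n, rfl, hp⟩
    exact ⟨n, rfl, Aux.widimLE_of_poly hp⟩
  · rintro ⟨n, rfl, hw⟩
    exact ⟨n, rfl, Aux.poly_of_widimLE hw⟩
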